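/- Let U be an open subset of ℝⁿ and suppose k ≥ 1 is such that for each connected component V of U and all x, y ∈ ∂V, there is a rectifiable path in ∂V from x to y of length at most k·|x − y|. If γ : [0,1] → closure(U) is a rectifiable path of length L whose endpoints lie in E = ∂U, then there exists a rectifiable path in E with the same endpoints and length at most k·L. -/

import Mathlib

open scoped ENNReal
open Set

namespace Stmt3Aux

noncomputable def aE (D : Set ℝ) (t : ℝ) : ℝ := sSup (D ∩ Set.Iic t)
noncomputable def bE (D : Set ℝ) (t : ℝ) : ℝ := sInf (D ∩ Set.Ici t)

variable {D : Set ℝ}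

lemma aE_mem (hD : IsClosed D) (h0 : (0:ℝ) ∈ D) {t : ℝ} (ht : t ∈ Icc (0:ℝ) 1) :
    aE D t ∈ D ∧ aE D t ≤ t := by
  have hne : (D ∩ Iic t).Nonempty := ⟨0, h0, ht.1⟩
  have hbdd : BddAbove (D ∩ Iic t) := bddAbove_Iic.mono inter_subset_right
  have hcl : IsClosed (D ∩ Iic t) := hD.inter isClosed_Iic
  exact ⟨(hcl.csSup_mem hne hbdd).1, csSup_le hne fun x hx => hx.2⟩

lemma bE_mem (hD : IsClosed D) (h1 : (1:ℝ) ∈ D) {t : ℝ} (ht : t ∈ Icc (0:ℝ) 1) :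
    bE D t ∈ D ∧ t ≤ bE D t := by
  have hne : (D ∩ Ici t).Nonempty := ⟨1, h1, ht.2⟩
  have hbdd : BddBelow (D ∩ Ici t) := bddBelow_Ici.mono inter_subset_right
  have hcl : IsClosed (D ∩ Ici t) := hD.inter isClosed_Ici
  exact ⟨(hcl.csInf_mem hne hbdd).1, le_csInf hne fun x hx => hx.2⟩

lemma le_aE {s t : ℝ} (hs : s ∈ D) (hst : s ≤ t) : s ≤ aE D t :=
  le_csSup (bddAbove_Iic.mono inter_subset_right) ⟨hs, hst⟩

lemma bE_le {s t : ℝ} (hs : s ∈ D) (hst : t ≤ s) : bE D t ≤ s :=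
  csInf_le (bddBelow_Ici.mono inter_subset_right) ⟨hs, hst⟩

lemma notMem_Ioo (hD : IsClosed D) (h0 : (0:ℝ) ∈ D) (h1 : (1:ℝ) ∈ D)
    {t : ℝ} (ht : t ∈ Icc (0:ℝ) 1) {d : ℝ} (hd : d ∈ D) :
    d ∉ Ioo (aE D t) (bE D t) := by
  rintro ⟨hd1, hd2⟩
  rcases le_total d t with h | h
  · exact absurd (le_aE hd h) (not_le.2 hd1)
  · exact absurd (bE_le hd h) (not_le.2 hd2)

lemma aE_lt (hD : IsClosed D) (h0 : (0:ℝ) ∈ D) {t : ℝ} (ht : t ∈ Icc (0:ℝ) 1)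
    (htD : t ∉ D) : aE D t < t :=
  lt_of_le_of_ne (aE_mem hD h0 ht).2 (fun h => htD (h ▸ (aE_mem hD h0 ht).1))

lemma lt_bE (hD : IsClosed D) (h1 : (1:ℝ) ∈ D) {t : ℝ} (ht : t ∈ Icc (0:ℝ) 1)
    (htD : t ∉ D) : t < bE D t :=
  lt_of_le_of_ne (bE_mem hD h1 ht).2 (fun h => htD (h ▸ (bE_mem hD h1 ht).1))

lemma aE_eq_of {p q u : ℝ} (hp : p ∈ D) (hdisj : ∀ d ∈ D, d ∉ Ioo p q)
    (hu : u ∈ Ioo p q) : aE D u = p := by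
  refine le_antisymm (csSup_le ⟨p, hp, hu.1.le⟩ ?_) (le_csSup (bddAbove_Iic.mono inter_subset_right) ⟨hp, hu.1.le⟩)
  rintro d ⟨hdD, hdu⟩
  by_contra h
  exact hdisj d hdD ⟨not_le.1 h, lt_of_le_of_lt hdu hu.2⟩

lemma bE_eq_of {p q u : ℝ} (hq : q ∈ D) (hdisj : ∀ d ∈ D, d ∉ Ioo p q)
    (hu : u ∈ Ioo p q) : bE D u = q := by
  refine le_antisymm (csInf_le (bddBelow_Ici.mono inter_subset_right) ⟨hq, hu.2.le⟩)
    (le_csInf ⟨q, hq, hu.2.le⟩ ?_)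
  rintro d ⟨hdD, hdu⟩
  by_contra h
  exact hdisj d hdD ⟨lt_of_lt_of_le hu.1 hdu, not_le.1 h⟩

/-- frontier of a connected component of an open set is contained in the frontier. -/
lemma frontier_ccIn_subset {E : Type*} [TopologicalSpace E] [LocallyConnectedSpace E]
    {U : Set E} (hU : IsOpen U) (v : E) :
    frontier (connectedComponentIn U v) ⊆ frontier U := by
  set V := connectedComponentIn U v with hV
  have hVopen : IsOpen V := hU.connectedComponentIn
  have hVU : V ⊆ U := connectedComponentIn_subset U v
  intro x hx
  rw [hVopen.frontier_eq] at hx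
  rw [hU.frontier_eq]
  refine ⟨closure_mono hVU hx.1, fun hxU => hx.2 ?_⟩
  have hW : IsOpen (connectedComponentIn U x) := hU.connectedComponentIn
  have hxW : x ∈ connectedComponentIn U x := mem_connectedComponentIn hxU
  obtain ⟨y, hyW, hyV⟩ := mem_closure_iff.1 hx.1 _ hW hxW
  have h1 : connectedComponentIn U x = connectedComponentIn U y := connectedComponentIn_eq hyW
  have h2 : V = connectedComponentIn U y := connectedComponentIn_eq hyV
  rw [h2, ← h1]
  exact hxW

end Stmt3Aux


open scoped ENNReal
open Set Stmt3Aux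

theorem stmt3 {n : ℕ} (U : Set (EuclideanSpace ℝ (Fin n))) (hU : IsOpen U)
    (k : ℝ) (hk : 1 ≤ k)
    (hcomp : ∀ v ∈ U, ∀ x ∈ frontier (connectedComponentIn U v),
      ∀ y ∈ frontier (connectedComponentIn U v),
      ∃ σ : ℝ → EuclideanSpace ℝ (Fin n), ContinuousOn σ (Set.Icc 0 1) ∧
        σ '' Set.Icc 0 1 ⊆ frontier (connectedComponentIn U v) ∧
        σ 0 = x ∧ σ 1 = y ∧
        eVariationOn σ (Set.Icc 0 1) ≤ ENNReal.ofReal (k * dist x y))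
    (γ : ℝ → EuclideanSpace ℝ (Fin n)) (hγc : ContinuousOn γ (Set.Icc 0 1))
    (hγU : γ '' Set.Icc 0 1 ⊆ closure U)
    (h0 : γ 0 ∈ frontier U) (h1 : γ 1 ∈ frontier U)
    (L : ℝ≥0∞) (hL : eVariationOn γ (Set.Icc 0 1) = L) (hLfin : L ≠ ⊤) :
    ∃ σ : ℝ → EuclideanSpace ℝ (Fin n), ContinuousOn σ (Set.Icc 0 1) ∧
      σ '' Set.Icc 0 1 ⊆ frontier U ∧ σ 0 = γ 0 ∧ σ 1 = γ 1 ∧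
      eVariationOn σ (Set.Icc 0 1) ≤ ENNReal.ofReal k * L := by
  classical
  have hk0 : (0:ℝ) < k := lt_of_lt_of_le one_pos hk
  have hfrU : ∀ z, z ∈ frontier U → z ∉ U := by
    intro z hz; rw [hU.frontier_eq] at hz; exact hz.2
  set D : Set ℝ := Icc 0 1 ∩ γ ⁻¹' Uᶜ with hDdef
  have hDsub : D ⊆ Icc 0 1 := inter_subset_left
  have hDcl : IsClosed D :=
    hγc.preimage_isClosed_of_isClosed isClosed_Icc hU.isClosed_compl
  have h0D : (0:ℝ) ∈ D := ⟨left_mem_Icc.2 zero_le_one, hfrU _ h0⟩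
  have h1D : (1:ℝ) ∈ D := ⟨right_mem_Icc.2 zero_le_one, hfrU _ h1⟩
  have hmemU : ∀ t ∈ Icc (0:ℝ) 1, t ∉ D → γ t ∈ U := by
    intro t ht htD
    by_contra h
    exact htD ⟨ht, h⟩
  -- the boundary-replacement predicate and choice function
  set Pred : ℝ → ℝ → (ℝ → EuclideanSpace ℝ (Fin n)) → Prop := fun p q σ =>
    ContinuousOn σ (Icc 0 1) ∧ σ '' Icc 0 1 ⊆ frontier U ∧ σ 0 = γ p ∧ σ 1 = γ q ∧
      eVariationOn σ (Icc 0 1) ≤ ENNReal.ofReal (k * dist (γ p) (γ q)) with hPreddef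
  set Φ : ℝ → ℝ → ℝ → EuclideanSpace ℝ (Fin n) := fun p q =>
    if h : ∃ σ, Pred p q σ then h.choose else fun _ => γ p with hΦdef
  have hΦspec : ∀ p q, (∃ σ, Pred p q σ) → Pred p q (Φ p q) := by
    intro p q h
    simp only [hΦdef, dif_pos h]
    exact h.choose_spec
  -- existence of boundary replacements on excursions
  have hExc : ∀ p q : ℝ, p ∈ D → q ∈ D → p < q → (∀ d ∈ D, d ∉ Ioo p q) →
      ∃ s, Pred p q s := by
    intro p q hp hq hpq hdisj
    have hpI : p ∈ Icc (0:ℝ) 1 := hDsub hp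
    have hqI : q ∈ Icc (0:ℝ) 1 := hDsub hq
    have hIoo : Ioo p q ⊆ Icc (0:ℝ) 1 := fun u hu =>
      ⟨hpI.1.trans hu.1.le, hu.2.le.trans hqI.2⟩
    have hIooU : ∀ u ∈ Ioo p q, γ u ∈ U := by
      intro u hu
      refine hmemU u (hIoo hu) ?_
      intro huD
      exact hdisj u huD hu
    set m := (p + q)/2 with hm
    have hmIoo : m ∈ Ioo p q := ⟨by rw [hm]; linarith, by rw [hm]; linarith⟩
    have hv : γ m ∈ U := hIooU m hmIoo
    have himg : γ '' Ioo p q ⊆ connectedComponentIn U (γ m) := by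
      apply IsPreconnected.subset_connectedComponentIn
      · exact isPreconnected_Ioo.image γ (hγc.mono hIoo)
      · exact ⟨m, hmIoo, rfl⟩
      · rintro z ⟨u, hu, rfl⟩
        exact hIooU u hu
    have hVopen : IsOpen (connectedComponentIn U (γ m)) := hU.connectedComponentIn
    have hfrP : γ p ∈ frontier (connectedComponentIn U (γ m)) := by
      have hcw : ContinuousWithinAt γ (Ioo p q) p :=
        (hγc.continuousWithinAt hpI).mono hIoo
      have hpc : p ∈ closure (Ioo p q) := by
        rw [closure_Ioo hpq.ne]
        exact ⟨le_refl p, hpq.le⟩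
      have h2 : γ p ∈ closure (γ '' Ioo p q) := hcw.mem_closure_image hpc
      rw [hVopen.frontier_eq]
      exact ⟨closure_mono himg h2, fun hpV => hp.2 (connectedComponentIn_subset U (γ m) hpV)⟩
    have hfrQ : γ q ∈ frontier (connectedComponentIn U (γ m)) := by
      have hcw : ContinuousWithinAt γ (Ioo p q) q :=
        (hγc.continuousWithinAt hqI).mono hIoo
      have hqc : q ∈ closure (Ioo p q) := by
        rw [closure_Ioo hpq.ne]
        exact ⟨hpq.le, le_refl q⟩
      have h2 : γ q ∈ closure (γ '' Ioo p q) := hcw.mem_closure_image hqc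
      rw [hVopen.frontier_eq]
      exact ⟨closure_mono himg h2, fun hqV => hq.2 (connectedComponentIn_subset U (γ m) hqV)⟩
    obtain ⟨s, hsc, hsim, hs0, hs1, hsvar⟩ := hcomp (γ m) hv (γ p) hfrP (γ q) hfrQ
    exact ⟨s, hsc, hsim.trans (frontier_ccIn_subset hU (γ m)), hs0, hs1, hsvar⟩
  set ψ : ℝ → ℝ → ℝ → ℝ := fun p q t => (t - p) / (q - p) with hψdef
  set σ : ℝ → EuclideanSpace ℝ (Fin n) := fun t =>
    if t ∈ D then γ t else Φ (aE D t) (bE D t) (ψ (aE D t) (bE D t) t) with hσdef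
  -- basic structure of excursions
  have hstr : ∀ t ∈ Icc (0:ℝ) 1, t ∉ D →
      aE D t ∈ D ∧ bE D t ∈ D ∧ aE D t < t ∧ t < bE D t ∧
        (∀ d ∈ D, d ∉ Ioo (aE D t) (bE D t)) ∧ (∃ s, Pred (aE D t) (bE D t) s) := by
    intro t ht htD
    have h1' := aE_mem hDcl h0D ht
    have h2' := bE_mem hDcl h1D ht
    have h3' := aE_lt hDcl h0D ht htD
    have h4' := lt_bE hDcl h1D ht htD
    have h5' : ∀ d ∈ D, d ∉ Ioo (aE D t) (bE D t) := fun d hd => notMem_Ioo hDcl h0D h1D ht hd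
    exact ⟨h1'.1, h2'.1, h3', h4', h5', hExc _ _ h1'.1 h2'.1 (h3'.trans h4') h5'⟩
  -- value of σ on a (closed) excursion interval
  have hσval : ∀ p q : ℝ, p ∈ D → q ∈ D → p < q → (∀ d ∈ D, d ∉ Ioo p q) →
      ∀ w ∈ Icc p q, σ w = Φ p q (ψ p q w) := by
    intro p q hp hq hpq hdisj w hw
    have hΦpq := hΦspec p q (hExc p q hp hq hpq hdisj)
    rcases eq_or_lt_of_le hw.1 with h | h
    · rw [← h]
      have h0' : ψ p q p = 0 := by simp [hψdef]
      rw [h0', hΦpq.2.2.1]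
      simp only [hσdef, if_pos hp]
    rcases eq_or_lt_of_le hw.2 with h' | h'
    · rw [h']
      have h1' : ψ p q q = 1 := by
        simp only [hψdef]
        rw [div_self (by linarith)]
      rw [h1', hΦpq.2.2.2.1]
      simp only [hσdef, if_pos hq]
    · have hwIoo : w ∈ Ioo p q := ⟨h, h'⟩
      have hwD : w ∉ D := fun hwD => hdisj w hwD hwIoo
      have ha : aE D w = p := aE_eq_of hp hdisj hwIoo
      have hb : bE D w = q := bE_eq_of hq hdisj hwIoo
      simp only [hσdef, if_neg hwD, ha, hb]
  -- variation of a function agreeing with the replacement on an excursion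
  have hvar_exc : ∀ (g : ℝ → EuclideanSpace ℝ (Fin n)) (p q : ℝ), p ∈ D → q ∈ D → p < q →
      (∃ s, Pred p q s) → (EqOn g (fun w => Φ p q (ψ p q w)) (Icc p q)) →
      eVariationOn g (Icc p q) ≤ ENNReal.ofReal k * eVariationOn γ (Icc p q) := by
    intro g p q hp hq hpq hex heq
    have hΦpq := hΦspec p q hex
    have hqp : (0:ℝ) < q - p := by linarith
    have hmono : MonotoneOn (ψ p q) (Icc p q) := by
      intro x _ y _ hxy
      simp only [hψdef]
      gcongr
    have hmaps : MapsTo (ψ p q) (Icc p q) (Icc 0 1) := by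
      intro x hx
      constructor
      · exact div_nonneg (by linarith [hx.1]) hqp.le
      · rw [div_le_one hqp]
        linarith [hx.2]
    calc eVariationOn g (Icc p q)
        = eVariationOn ((Φ p q) ∘ (ψ p q)) (Icc p q) := eVariationOn.eq_of_eqOn heq
      _ ≤ eVariationOn (Φ p q) (Icc 0 1) :=
          eVariationOn.comp_le_of_monotoneOn _ _ hmono hmaps
      _ ≤ ENNReal.ofReal (k * dist (γ p) (γ q)) := hΦpq.2.2.2.2
      _ = ENNReal.ofReal k * edist (γ p) (γ q) := by
          rw [edist_dist, ← ENNReal.ofReal_mul hk0.le]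
      _ ≤ ENNReal.ofReal k * eVariationOn γ (Icc p q) :=
          mul_le_mul_right (eVariationOn.edist_le γ (left_mem_Icc.2 hpq.le) (right_mem_Icc.2 hpq.le)) _
  -- the approximating sequence
  set F : ℕ → ℝ → EuclideanSpace ℝ (Fin n) := fun N t =>
    if t ∉ D ∧ 1/((N:ℝ)+1) < bE D t - aE D t then σ t else γ t with hFdef
  have hsplit : ∀ g : ℝ → EuclideanSpace ℝ (Fin n), ∀ x y z : ℝ, x ≤ y → y ≤ z →
      eVariationOn g (Icc x z) = eVariationOn g (Icc x y) + eVariationOn g (Icc y z) := by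
    intro g x y z hxy hyz
    have h := eVariationOn.Icc_add_Icc g (s := univ) hxy hyz (mem_univ y)
    simpa [univ_inter] using h.symm
  have key : ∀ (N m : ℕ), ∀ s t : ℝ, s ∈ D → t ∈ D → s ≤ t →
      t - s ≤ m * (1/((N:ℝ)+1)) →
      eVariationOn (F N) (Icc s t) ≤ ENNReal.ofReal k * eVariationOn γ (Icc s t) := by
    intro N m
    have hδpos : (0:ℝ) < 1/((N:ℝ)+1) := by positivity
    induction m with
    | zero =>
      intro s t hs ht hst hlen
      have hts : s = t := le_antisymm hst (by simpa using hlen)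
      rw [← hts, Icc_self]
      rw [eVariationOn.subsingleton (F N) subsingleton_singleton]
      exact zero_le
    | succ m IH =>
      intro s t hs ht hst hlen
      by_cases hex : ∃ u, u ∈ Ioo s t ∧ u ∉ D ∧ 1/((N:ℝ)+1) < bE D u - aE D u
      · obtain ⟨u, huIoo, huD, hbig⟩ := hex
        have huI : u ∈ Icc (0:ℝ) 1 :=
          ⟨(hDsub hs).1.trans huIoo.1.le, huIoo.2.le.trans (hDsub ht).2⟩
        obtain ⟨hpD, hqD, hpu, huq, hdisj, hexc⟩ := hstr u huI huD
        set p := aE D u with hpdef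
        set q := bE D u with hqdef
        have hpq : p < q := hpu.trans huq
        have hsp : s ≤ p := le_aE hs huIoo.1.le
        have hqt : q ≤ t := bE_le ht huIoo.2.le
        -- F N agrees with the replacement on [p, q]
        have hFeq : EqOn (F N) (fun w => Φ p q (ψ p q w)) (Icc p q) := by
          intro w hw
          have hσw := hσval p q hpD hqD hpq hdisj w hw
          simp only
          rw [← hσw]
          rcases eq_or_lt_of_le hw.1 with h | h
          · have hwD : w ∈ D := h ▸ hpD
            simp only [hFdef]
            rw [if_neg (fun hc => hc.1 hwD)]
            simp only [hσdef, if_pos hwD]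
          rcases eq_or_lt_of_le hw.2 with h' | h'
          · have hwD : w ∈ D := h'.symm ▸ hqD
            simp only [hFdef]
            rw [if_neg (fun hc => hc.1 hwD)]
            simp only [hσdef, if_pos hwD]
          · have hwD : w ∉ D := fun hwD => hdisj w hwD ⟨h, h'⟩
            have ha : aE D w = p := aE_eq_of hpD hdisj ⟨h, h'⟩
            have hb : bE D w = q := bE_eq_of hqD hdisj ⟨h, h'⟩
            simp only [hFdef]
            rw [if_pos ⟨hwD, by rw [ha, hb]; exact hbig⟩]
        have e1 : eVariationOn (F N) (Icc s t) =
            eVariationOn (F N) (Icc s p) + eVariationOn (F N) (Icc p q) +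
              eVariationOn (F N) (Icc q t) := by
          rw [hsplit (F N) s p t hsp (hpq.le.trans hqt), hsplit (F N) p q t hpq.le hqt,
            add_assoc]
        have e2 : eVariationOn γ (Icc s t) =
            eVariationOn γ (Icc s p) + eVariationOn γ (Icc p q) +
              eVariationOn γ (Icc q t) := by
          rw [hsplit γ s p t hsp (hpq.le.trans hqt), hsplit γ p q t hpq.le hqt, add_assoc]
        have hlen1 : p - s ≤ m * (1/((N:ℝ)+1)) := by
          push_cast at hlen ⊢
          linarith [hbig, hqt]
        have hlen2 : t - q ≤ m * (1/((N:ℝ)+1)) := by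
          push_cast at hlen ⊢
          linarith [hbig, hsp]
        have b1 := IH s p hs hpD hsp hlen1
        have b2 := hvar_exc (F N) p q hpD hqD hpq hexc hFeq
        have b3 := IH q t hqD ht (hqt) hlen2
        rw [e1, e2, mul_add, mul_add]
        exact add_le_add (add_le_add b1 b2) b3
      · have hFeq : EqOn (F N) γ (Icc s t) := by
          intro w hw
          simp only [hFdef]
          rw [if_neg]
          rintro ⟨hwD, hwbig⟩
          have hwI : w ∈ Icc (0:ℝ) 1 := ⟨(hDsub hs).1.trans hw.1, hw.2.trans (hDsub ht).2⟩
          have hws : w ≠ s := fun h => hwD (h ▸ hs)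
          have hwt : w ≠ t := fun h => hwD (h ▸ ht)
          exact hex ⟨w, ⟨lt_of_le_of_ne hw.1 (Ne.symm hws), lt_of_le_of_ne hw.2 hwt⟩, hwD, hwbig⟩
        rw [eVariationOn.eq_of_eqOn hFeq]
        exact le_mul_of_one_le_left zero_le (ENNReal.one_le_ofReal.2 hk)
  have hσ0 : σ 0 = γ 0 := by simp only [hσdef, if_pos h0D]
  have hσ1 : σ 1 = γ 1 := by simp only [hσdef, if_pos h1D]
  have hσim : σ '' Icc 0 1 ⊆ frontier U := by
    rintro z ⟨t, ht, rfl⟩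
    by_cases htD : t ∈ D
    · have : σ t = γ t := by simp only [hσdef, if_pos htD]
      rw [this, hU.frontier_eq]
      exact ⟨hγU ⟨t, ht, rfl⟩, htD.2⟩
    · obtain ⟨hpD, hqD, hpt, htq, hdisj, hexc⟩ := hstr t ht htD
      have hΦpq := hΦspec _ _ hexc
      have : σ t = Φ (aE D t) (bE D t) (ψ (aE D t) (bE D t) t) := by
        simp only [hσdef, if_neg htD]
      rw [this]
      apply hΦpq.2.1
      refine ⟨ψ (aE D t) (bE D t) t, ⟨?_, ?_⟩, rfl⟩
      · exact div_nonneg (by linarith) (by linarith)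
      · rw [div_le_one (by linarith)]
        linarith
  have hFvar : ∀ N : ℕ, eVariationOn (F N) (Icc 0 1) ≤ ENNReal.ofReal k * L := by
    intro N
    have h := key N (N+1) 0 1 h0D h1D zero_le_one (by
      push_cast
      rw [mul_one_div, div_self (by positivity)]
      norm_num)
    rwa [hL] at h
  have hptw : ∀ x ∈ Icc (0:ℝ) 1, Filter.Tendsto (fun N => F N x) Filter.atTop (nhds (σ x)) := by
    intro x hx
    by_cases hxD : x ∈ D
    · have hFx : ∀ N, F N x = σ x := by
        intro N
        simp only [hFdef, hσdef]
        rw [if_neg (fun hc => hc.1 hxD), if_pos hxD]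
      exact Filter.Tendsto.congr (fun N => (hFx N).symm) tendsto_const_nhds
    · obtain ⟨hpD, hqD, hpt, htq, hdisj, hexc⟩ := hstr x hx hxD
      have hpos : (0:ℝ) < bE D x - aE D x := by linarith
      have hev : ∀ᶠ N : ℕ in Filter.atTop, 1/((N:ℝ)+1) < bE D x - aE D x := by
        have := tendsto_one_div_add_atTop_nhds_zero_nat (𝕜 := ℝ)
        exact this.eventually (gt_mem_nhds hpos)
      refine Filter.Tendsto.congr' ?_ tendsto_const_nhds
      filter_upwards [hev] with N hN
      simp only [hFdef]
      rw [if_pos ⟨hxD, hN⟩]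
  have hσvar : eVariationOn σ (Icc 0 1) ≤ ENNReal.ofReal k * L := by
    by_contra hcon
    have hlt : ENNReal.ofReal k * L < eVariationOn σ (Icc 0 1) := not_le.1 hcon
    obtain ⟨N, hN⟩ := (eVariationOn.lowerSemicontinuous_aux hptw hlt).exists
    exact absurd hN (not_lt.2 (hFvar N))
  have hbuniq : ∀ u v : ℝ, u ∈ Icc (0:ℝ) 1 → v ∈ Icc (0:ℝ) 1 → u ∉ D → v ∉ D →
      aE D u = aE D v → bE D u = bE D v := by
    have main : ∀ u v : ℝ, u ∈ Icc (0:ℝ) 1 → v ∈ Icc (0:ℝ) 1 → u ∉ D → v ∉ D →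
        aE D u = aE D v → u ≤ v → bE D u = bE D v := by
      intro u v huI hvI huD hvD hae huv
      obtain ⟨hpD, hqD, hpu, huq, hdisj, -⟩ := hstr u huI huD
      obtain ⟨hpD', hqD', hpv, hvq, hdisj', -⟩ := hstr v hvI hvD
      have hvlt : v < bE D u := by
        by_contra hle
        push_neg at hle
        have h1 := le_aE hqD hle
        rw [← hae] at h1
        linarith
      have hav : aE D u < v := by rw [hae]; exact hpv
      exact (bE_eq_of hqD hdisj ⟨hav, hvlt⟩).symm
    intro u v huI hvI huD hvD hae
    rcases le_total u v with h | h
    · exact main u v huI hvI huD hvD hae h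
    · exact (main v u hvI huI hvD huD hae.symm h).symm
  have hauniq : ∀ u v : ℝ, u ∈ Icc (0:ℝ) 1 → v ∈ Icc (0:ℝ) 1 → u ∉ D → v ∉ D →
      bE D u = bE D v → aE D u = aE D v := by
    have main : ∀ u v : ℝ, u ∈ Icc (0:ℝ) 1 → v ∈ Icc (0:ℝ) 1 → u ∉ D → v ∉ D →
        bE D u = bE D v → u ≤ v → aE D u = aE D v := by
      intro u v huI hvI huD hvD hbe huv
      obtain ⟨hpD, hqD, hpu, huq, hdisj, -⟩ := hstr u huI huD
      obtain ⟨hpD', hqD', hpv, hvq, hdisj', -⟩ := hstr v hvI hvD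
      have hult : aE D v < u := by
        by_contra hle
        push_neg at hle
        have h1 := bE_le hpD' hle
        rw [hbe] at h1
        linarith
      have hub : u < bE D v := by rw [← hbe]; exact huq
      exact aE_eq_of hpD' hdisj' ⟨hult, hub⟩
    intro u v huI hvI huD hvD hbe
    rcases le_total u v with h | h
    · exact main u v huI hvI huD hvD hbe h
    · exact (main v u hvI huI hvD huD hbe.symm h).symm
  have hsep : ∀ u v : ℝ, u ∈ Icc (0:ℝ) 1 → v ∈ Icc (0:ℝ) 1 → u ∉ D → v ∉ D →
      aE D u < aE D v → bE D u ≤ aE D v := by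
    intro u v huI hvI huD hvD hav
    obtain ⟨hpD, hqD, hpu, huq, hdisj, -⟩ := hstr u huI huD
    obtain ⟨hpD', -, -, -, -, -⟩ := hstr v hvI hvD
    by_contra hle
    push_neg at hle
    exact hdisj (aE D v) hpD' ⟨hav, hle⟩
  have hsep2 : ∀ u v : ℝ, u ∈ Icc (0:ℝ) 1 → v ∈ Icc (0:ℝ) 1 → u ∉ D → v ∉ D →
      bE D u < bE D v → bE D u ≤ aE D v := by
    intro u v huI hvI huD hvD hbv
    obtain ⟨-, hqD, -, -, -, -⟩ := hstr u huI huD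
    obtain ⟨hpD', hqD', hpv, hvq, hdisj', -⟩ := hstr v hvI hvD
    by_contra hle
    push_neg at hle
    exact hdisj' (bE D u) hqD ⟨hle, hbv⟩
  have hσcont : ContinuousOn σ (Icc 0 1) := by
    intro t₀ ht₀
    by_cases ht₀D : t₀ ∈ D
    swap
    · -- interior of an excursion: locally a reparametrized replacement path
      obtain ⟨hpD, hqD, hpt, htq, hdisj, hexc⟩ := hstr t₀ ht₀ ht₀D
      have hΦpq := hΦspec _ _ hexc
      have hψc : Continuous (ψ (aE D t₀) (bE D t₀)) := by
        simp only [hψdef]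
        exact (continuous_id.sub continuous_const).div_const _
      have hψt₀ : ψ (aE D t₀) (bE D t₀) t₀ ∈ Ioo (0:ℝ) 1 := by
        constructor
        · exact div_pos (by linarith) (by linarith)
        · rw [div_lt_one (by linarith)]
          linarith
      have hΦca : ContinuousAt (Φ (aE D t₀) (bE D t₀)) (ψ (aE D t₀) (bE D t₀) t₀) :=
        hΦpq.1.continuousAt (Icc_mem_nhds hψt₀.1 hψt₀.2)
      have hca : ContinuousAt (fun w => Φ (aE D t₀) (bE D t₀) (ψ (aE D t₀) (bE D t₀) w)) t₀ :=
        hΦca.comp hψc.continuousAt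
      have heq : (fun w => Φ (aE D t₀) (bE D t₀) (ψ (aE D t₀) (bE D t₀) w)) =ᶠ[nhds t₀] σ := by
        filter_upwards [isOpen_Ioo.mem_nhds (⟨hpt, htq⟩ : t₀ ∈ Ioo (aE D t₀) (bE D t₀))] with w hw
        exact (hσval _ _ hpD hqD (hpt.trans htq) hdisj w (Ioo_subset_Icc_self hw)).symm
      exact (hca.congr heq).continuousWithinAt
    · -- t₀ on the boundary set D
      rw [Metric.continuousWithinAt_iff]
      intro ε hε
      have hσt₀ : σ t₀ = γ t₀ := by simp only [hσdef, if_pos ht₀D]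
      set ε' := ε / (2*(k+1)) with hε'def
      have hε' : 0 < ε' := by rw [hε'def]; positivity
      have hk1 : (0:ℝ) < k + 1 := by linarith
      have hsum : k * ε' + ε' < ε := by
        have h2 : k * ε' + ε' = ε/2 := by
          rw [hε'def]
          field_simp
        rw [h2]
        linarith
      have huc := isCompact_Icc.uniformContinuousOn_of_continuous hγc
      rw [Metric.uniformContinuousOn_iff] at huc
      obtain ⟨δ₁, hδ₁, hγuc⟩ := huc ε' hε'
      have hRmod : ∃ δR > 0, ∀ t, t ∈ Icc (0:ℝ) 1 → t ∉ D → aE D t = t₀ → t₀ < t →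
          t - t₀ < δR → dist (σ t) (γ t₀) < ε := by
        by_cases hR : ∃ u, u ∈ Icc (0:ℝ) 1 ∧ u ∉ D ∧ aE D u = t₀
        · obtain ⟨u₀, hu₀I, hu₀D, hu₀a⟩ := hR
          obtain ⟨hpD₀, hqD₀, hpt₀, htq₀, hdisj₀, hexc₀⟩ := hstr u₀ hu₀I hu₀D
          have hq₀ : t₀ < bE D u₀ := by rw [← hu₀a]; exact hpt₀.trans htq₀
          have hexc₀' : ∃ s, Pred t₀ (bE D u₀) s := by rw [← hu₀a]; exact hexc₀
          have hΦ₀ := hΦspec t₀ (bE D u₀) hexc₀'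
          have hc0 : ContinuousWithinAt (Φ t₀ (bE D u₀)) (Icc 0 1) 0 :=
            hΦ₀.1 0 (left_mem_Icc.2 zero_le_one)
          rw [Metric.continuousWithinAt_iff] at hc0
          obtain ⟨δ₂, hδ₂, hΦmod⟩ := hc0 ε hε
          refine ⟨δ₂ * (bE D u₀ - t₀), mul_pos hδ₂ (by linarith), ?_⟩
          intro t htI htD hta htgt htδ
          obtain ⟨hpD', hqD', hpt', htq', hdisj', hexc'⟩ := hstr t htI htD
          have hbeq : bE D t = bE D u₀ := hbuniq t u₀ htI hu₀I htD hu₀D (by rw [hta, hu₀a])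
          have hσt : σ t = Φ t₀ (bE D u₀) (ψ t₀ (bE D u₀) t) := by
            simp only [hσdef, if_neg htD]
            rw [hta, hbeq]
          have htb : t < bE D u₀ := by rw [← hbeq]; exact htq'
          have hmem : ψ t₀ (bE D u₀) t ∈ Icc (0:ℝ) 1 := by
            constructor
            · exact div_nonneg (by linarith) (by linarith)
            · rw [div_le_one (by linarith)]
              linarith
          have hdist0 : dist (ψ t₀ (bE D u₀) t) 0 < δ₂ := by
            rw [Real.dist_eq, sub_zero, abs_of_nonneg hmem.1]
            exact (div_lt_iff₀ (by linarith)).2 htδ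
          have h7 := hΦmod hmem hdist0
          rw [hΦ₀.2.2.1] at h7
          rw [hσt]
          exact h7
        · exact ⟨1, one_pos, fun t htI htD hta _ _ => absurd ⟨t, htI, htD, hta⟩ hR⟩
      have hLmod : ∃ δL > 0, ∀ t, t ∈ Icc (0:ℝ) 1 → t ∉ D → bE D t = t₀ → t < t₀ →
          t₀ - t < δL → dist (σ t) (γ t₀) < ε := by
        by_cases hR : ∃ u, u ∈ Icc (0:ℝ) 1 ∧ u ∉ D ∧ bE D u = t₀
        · obtain ⟨u₀, hu₀I, hu₀D, hu₀b⟩ := hR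
          obtain ⟨hpD₀, hqD₀, hpt₀, htq₀, hdisj₀, hexc₀⟩ := hstr u₀ hu₀I hu₀D
          have hp₀ : aE D u₀ < t₀ := by rw [← hu₀b]; exact hpt₀.trans htq₀
          have hexc₀' : ∃ s, Pred (aE D u₀) t₀ s := by rw [← hu₀b]; exact hexc₀
          have hΦ₀ := hΦspec (aE D u₀) t₀ hexc₀'
          have hc1 : ContinuousWithinAt (Φ (aE D u₀) t₀) (Icc 0 1) 1 :=
            hΦ₀.1 1 (right_mem_Icc.2 zero_le_one)
          rw [Metric.continuousWithinAt_iff] at hc1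
          obtain ⟨δ₃, hδ₃, hΦmod⟩ := hc1 ε hε
          refine ⟨δ₃ * (t₀ - aE D u₀), mul_pos hδ₃ (by linarith), ?_⟩
          intro t htI htD htb htlt htδ
          obtain ⟨hpD', hqD', hpt', htq', hdisj', hexc'⟩ := hstr t htI htD
          have haeq : aE D t = aE D u₀ := hauniq t u₀ htI hu₀I htD hu₀D (by rw [htb, hu₀b])
          have hσt : σ t = Φ (aE D u₀) t₀ (ψ (aE D u₀) t₀ t) := by
            simp only [hσdef, if_neg htD]
            rw [haeq, htb]
          have hat : aE D u₀ < t := by rw [← haeq]; exact hpt'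
          have hmem : ψ (aE D u₀) t₀ t ∈ Icc (0:ℝ) 1 := by
            constructor
            · exact div_nonneg (by linarith) (by linarith)
            · rw [div_le_one (by linarith)]
              linarith
          have hdist1 : dist (ψ (aE D u₀) t₀ t) 1 < δ₃ := by
            rw [Real.dist_eq, abs_of_nonpos (by linarith [hmem.2])]
            simp only [hψdef]
            have h6 : -((t - aE D u₀)/(t₀ - aE D u₀) - 1) = (t₀ - t)/(t₀ - aE D u₀) := by
              have hc : t₀ - aE D u₀ ≠ 0 := by linarith
              field_simp
              ring
            rw [h6]
            exact (div_lt_iff₀ (by linarith)).2 htδ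
          have h7 := hΦmod hmem hdist1
          rw [hΦ₀.2.2.2.1] at h7
          rw [hσt]
          exact h7
        · exact ⟨1, one_pos, fun t htI htD htb _ _ => absurd ⟨t, htI, htD, htb⟩ hR⟩
      have hQR : ∃ δ > 0, ∀ t, t ∈ Icc (0:ℝ) 1 → t ∉ D → t₀ < aE D t → aE D t < t₀ + δ →
          bE D t - aE D t < δ₁ := by
        by_cases hex : ∃ u, u ∈ Icc (0:ℝ) 1 ∧ u ∉ D ∧ t₀ < aE D u ∧ aE D u ≤ t₀ + δ₁ ∧
            δ₁ ≤ bE D u - aE D u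
        · obtain ⟨u₀, hu₀I, hu₀D, h1₀, h2₀, h3₀⟩ := hex
          refine ⟨aE D u₀ - t₀, by linarith, ?_⟩
          intro t htI htD hta htd
          have hlt : aE D t < aE D u₀ := by linarith
          have h8 := hsep t u₀ htI hu₀I htD hu₀D hlt
          linarith
        · refine ⟨δ₁, hδ₁, ?_⟩
          intro t htI htD hta htd
          by_contra hge
          push_neg at hge
          exact hex ⟨t, htI, htD, hta, by linarith, hge⟩
      have hQL : ∃ δ > 0, ∀ t, t ∈ Icc (0:ℝ) 1 → t ∉ D → bE D t < t₀ → t₀ - δ < bE D t →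
          bE D t - aE D t < δ₁ := by
        by_cases hex : ∃ u, u ∈ Icc (0:ℝ) 1 ∧ u ∉ D ∧ t₀ - δ₁ ≤ bE D u ∧ bE D u < t₀ ∧
            δ₁ ≤ bE D u - aE D u
        · obtain ⟨u₀, hu₀I, hu₀D, h1₀, h2₀, h3₀⟩ := hex
          refine ⟨t₀ - bE D u₀, by linarith, ?_⟩
          intro t htI htD htb htd
          have hlt : bE D u₀ < bE D t := by linarith
          have h8 := hsep2 u₀ t hu₀I htI hu₀D htD hlt
          linarith
        · refine ⟨δ₁, hδ₁, ?_⟩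
          intro t htI htD htb htd
          by_contra hge
          push_neg at hge
          exact hex ⟨t, htI, htD, by linarith, htb, hge⟩
      obtain ⟨δR, hδR, hRmod⟩ := hRmod
      obtain ⟨δL, hδL, hLmod⟩ := hLmod
      obtain ⟨δQR, hδQR, hQR⟩ := hQR
      obtain ⟨δQL, hδQL, hQL⟩ := hQL
      refine ⟨min (min δ₁ δR) (min δL (min δQR δQL)), by positivity, ?_⟩
      intro t htI htdist
      rw [hσt₀]
      have habs : |t - t₀| < min (min δ₁ δR) (min δL (min δQR δQL)) := by
        rw [← Real.dist_eq]; exact htdist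
      have hd1 : |t - t₀| < δ₁ := lt_of_lt_of_le habs ((min_le_left _ _).trans (min_le_left _ _))
      have hdR : |t - t₀| < δR := lt_of_lt_of_le habs ((min_le_left _ _).trans (min_le_right _ _))
      have hdL : |t - t₀| < δL := lt_of_lt_of_le habs ((min_le_right _ _).trans (min_le_left _ _))
      have hdQR : |t - t₀| < δQR := lt_of_lt_of_le habs
        ((min_le_right _ _).trans ((min_le_right _ _).trans (min_le_left _ _)))
      have hdQL : |t - t₀| < δQL := lt_of_lt_of_le habs
        ((min_le_right _ _).trans ((min_le_right _ _).trans (min_le_right _ _)))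
      by_cases htD : t ∈ D
      · have hσt : σ t = γ t := by simp only [hσdef, if_pos htD]
        rw [hσt]
        have h3 := hγuc t htI t₀ ht₀ (by rw [Real.dist_eq]; exact hd1)
        linarith [mul_pos hk0 hε', hsum, h3]
      · obtain ⟨hpD, hqD, hpt, htq, hdisj, hexc⟩ := hstr t htI htD
        have hΦpq := hΦspec _ _ hexc
        have hσt : σ t = Φ (aE D t) (bE D t) (ψ (aE D t) (bE D t) t) := by
          simp only [hσdef, if_neg htD]
        have hψIcc : ψ (aE D t) (bE D t) t ∈ Icc (0:ℝ) 1 := by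
          constructor
          · exact div_nonneg (by linarith) (by linarith)
          · rw [div_le_one (by linarith)]
            linarith
        have htne : t ≠ t₀ := fun h => htD (h ▸ ht₀D)
        rcases lt_or_gt_of_ne htne with hlt | hgt
        · -- t < t₀
          have hqle : bE D t ≤ t₀ := bE_le ht₀D hlt.le
          rcases eq_or_lt_of_le hqle with he | he
          · exact hLmod t htI htD he hlt (by cases abs_lt.1 hdL with | intro h1 h2 => linarith)
          · have hshort : bE D t - aE D t < δ₁ :=
              hQL t htI htD he (by cases abs_lt.1 hdQL with | intro h1 h2 => linarith)
            have hb1 : dist (σ t) (γ (bE D t)) ≤ k * dist (γ (aE D t)) (γ (bE D t)) := by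
              have h4 := le_trans
                (eVariationOn.edist_le (Φ (aE D t) (bE D t)) hψIcc (right_mem_Icc.2 zero_le_one))
                hΦpq.2.2.2.2
              have h5 := (edist_le_ofReal (by positivity)).1 h4
              rw [hΦpq.2.2.2.1] at h5
              rw [hσt]
              exact h5
            have hb2 : dist (γ (aE D t)) (γ (bE D t)) < ε' := by
              refine hγuc _ (hDsub hpD) _ (hDsub hqD) ?_
              rw [Real.dist_eq, abs_of_nonpos (by linarith)]
              linarith
            have hb3 : dist (γ (bE D t)) (γ t₀) < ε' := by
              refine hγuc _ (hDsub hqD) _ ht₀ ?_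
              rw [Real.dist_eq, abs_of_nonpos (by linarith)]
              cases abs_lt.1 hd1 with | intro h1 h2 => linarith
            calc dist (σ t) (γ t₀) ≤ dist (σ t) (γ (bE D t)) + dist (γ (bE D t)) (γ t₀) :=
                  dist_triangle _ _ _
              _ < ε := by linarith [hb1, hb3, hsum, mul_lt_mul_of_pos_left hb2 hk0]
        · -- t₀ < t
          have hple : t₀ ≤ aE D t := le_aE ht₀D hgt.le
          rcases eq_or_lt_of_le hple with he | he
          · exact hRmod t htI htD he.symm hgt (by cases abs_lt.1 hdR with | intro h1 h2 => linarith)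
          · have hshort : bE D t - aE D t < δ₁ :=
              hQR t htI htD he (by cases abs_lt.1 hdQR with | intro h1 h2 => linarith)
            have hb1 : dist (σ t) (γ (aE D t)) ≤ k * dist (γ (aE D t)) (γ (bE D t)) := by
              have h4 := le_trans
                (eVariationOn.edist_le (Φ (aE D t) (bE D t)) hψIcc (left_mem_Icc.2 zero_le_one))
                hΦpq.2.2.2.2
              have h5 := (edist_le_ofReal (by positivity)).1 h4
              rw [hΦpq.2.2.1] at h5
              rw [hσt]
              exact h5
            have hb2 : dist (γ (aE D t)) (γ (bE D t)) < ε' := by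
              refine hγuc _ (hDsub hpD) _ (hDsub hqD) ?_
              rw [Real.dist_eq, abs_of_nonpos (by linarith)]
              linarith
            have hb3 : dist (γ (aE D t)) (γ t₀) < ε' := by
              refine hγuc _ (hDsub hpD) _ ht₀ ?_
              rw [Real.dist_eq, abs_of_nonneg (by linarith)]
              cases abs_lt.1 hd1 with | intro h1 h2 => linarith
            calc dist (σ t) (γ t₀) ≤ dist (σ t) (γ (aE D t)) + dist (γ (aE D t)) (γ t₀) :=
                  dist_triangle _ _ _
              _ < ε := by linarith [hb1, hb3, hsum, mul_lt_mul_of_pos_left hb2 hk0]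

  exact ⟨σ, hσcont, hσim, hσ0, hσ1, hσvar⟩
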